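/- For n ≥ 1 and 0 ≤ k ≤ n-1, the number of subgraphs G = (V,E) of the path graph P_n with n ∈ V and |E| = k equals ∑_{r=0}^{n-k-1} C(n-k-1, r) · C(r+k, r). -/

import Mathlib

open Finset

def pc : ℕ → (ℕ → ℕ) × (ℕ → ℕ)
  | 0 => (fun k => if k = 0 then 1 else 0, fun k => if k = 0 then 2 else 0)
  | n+1 =>
      let p := pc n
      let f := fun k => (match k with | 0 => 0 | k+1 => p.1 k) + p.2 k
      (f, fun k => f k + p.2 k)

def pcF (n k : ℕ) : ℕ := (pc n).1 k
def pcH (n k : ℕ) : ℕ := (pc n).2 k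

lemma pcF_zero (k : ℕ) : pcF 0 k = if k = 0 then 1 else 0 := rfl
lemma pcH_zero (k : ℕ) : pcH 0 k = if k = 0 then 2 else 0 := rfl
lemma pcF_succ (n k : ℕ) :
    pcF (n+1) k = (match k with | 0 => 0 | k+1 => pcF n k) + pcH n k := rfl
lemma pcH_succ (n k : ℕ) : pcH (n+1) k = pcF (n+1) k + pcH n k := rfl

def Fc (n k : ℕ) : ℕ := ∑ r ∈ range (n - k + 1), (n-k).choose r * (r+k).choose r
def Hc (n k : ℕ) : ℕ :=
  (if k = 0 then 1 else 0) + ∑ r ∈ range (n + 1 - k), (n+1-k).choose (r+1) * (r+k).choose r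

lemma choose_symm_add (r k : ℕ) : (r+k).choose r = (r+k).choose k := by
  rw [← Nat.choose_symm (Nat.le_add_left k r)]
  congr 1
  omega

lemma L2 (n k : ℕ) :
    Fc (n+1) k = (match k with | 0 => 0 | k+1 => Fc n k) + Hc n k := by
  match k with
  | 0 =>
    simp only [Fc, Hc, Nat.sub_zero, add_zero, Nat.choose_self, mul_one, if_pos rfl]
    rw [Finset.sum_range_succ' (fun r => (n+1).choose r) (n+1)]
    simp [Nat.choose_zero_right]
    omega
  | k+1 =>
    have h1 : n + 1 - (k+1) = n - k := by omega
    have h2 : n + 1 - (k + 1) = n - k := h1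
    simp only [Fc, Hc, h1, if_neg (Nat.succ_ne_zero k), zero_add]
    have key : ∀ r : ℕ, (n-k).choose r * (r+(k+1)).choose r
        = (n-k).choose r * (r+k).choose r + (n-k).choose r * (r+k).choose (k+1) := by
      intro r
      have : (r + (k+1)).choose r = (r+k).choose r + (r+k).choose (k+1) := by
        rw [choose_symm_add, show r + (k+1) = (r+k)+1 from by ring, Nat.choose_succ_succ,
          choose_symm_add]
      rw [this, Nat.mul_add]
    rw [Finset.sum_congr rfl (fun r _ => key r), Finset.sum_add_distrib]
    congr 1
    rw [Finset.sum_range_succ' (fun r => (n-k).choose r * (r+k).choose (k+1)) (n-k)]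
    have hz : (0+k).choose (k+1) = 0 := by
      rw [zero_add]; exact Nat.choose_succ_self k
    rw [hz]
    simp only [Nat.choose_zero_right, one_mul, mul_zero, add_zero]
    apply Finset.sum_congr rfl
    intro r _
    have h3 : (r + (k+1)).choose r = (r+(k+1)).choose (k+1) := choose_symm_add r (k+1)
    rw [h3]
    congr 2
    ring

lemma L1 (n k : ℕ) (hk : k ≤ n + 1) : Hc (n+1) k = Fc (n+1) k + Hc n k := by
  have ha : n + 1 + 1 - k = (n + 1 - k) + 1 := by omega
  simp only [Hc, Fc, ha]
  set a := n + 1 - k with hadef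
  have key : ∀ r : ℕ, (a+1).choose (r+1) * (r+k).choose r
      = a.choose r * (r+k).choose r + a.choose (r+1) * (r+k).choose r := by
    intro r
    rw [Nat.choose_succ_succ, Nat.add_mul]
  rw [Finset.sum_congr rfl (fun r _ => key r), Finset.sum_add_distrib]
  have h2 : ∑ r ∈ range (a+1), a.choose (r+1) * (r+k).choose r
      = ∑ r ∈ range a, a.choose (r+1) * (r+k).choose r := by
    rw [Finset.sum_range_succ, Nat.choose_succ_self, zero_mul, add_zero]
  rw [h2]
  omega

lemma pc_zero : ∀ n, (∀ k, n < k → pcH n k = 0) ∧ (∀ k, n < k → pcF n k = 0) := by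
  intro n
  induction n with
  | zero =>
    constructor <;> intro k hk <;>
      simp [pcH_zero, pcF_zero] <;> omega
  | succ n ih =>
    have hf : ∀ k, n + 1 < k → pcF (n+1) k = 0 := by
      intro k hk
      rw [pcF_succ]
      match k, hk with
      | k+1, hk =>
        show pcF n k + pcH n (k+1) = 0
        rw [ih.2 k (by omega), ih.1 (k+1) (by omega)]
    exact ⟨fun k hk => by rw [pcH_succ, hf k hk, ih.1 k (by omega)], hf⟩

lemma Hc_gt (n k : ℕ) (hk : n + 1 < k) : Hc (n+1) k = Hc n k := by
  have h1 : n + 1 + 1 - k = 0 := by omega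
  have h2 : n + 1 - k = 0 := by omega
  simp [Hc, h1, h2]

lemma pc_closed : ∀ n, (∀ k, pcH n k = Hc n k) ∧ (∀ k, k ≤ n → pcF n k = Fc n k) := by
  intro n
  induction n with
  | zero =>
    constructor
    · intro k
      match k with
      | 0 => simp [pcH_zero, Hc]
      | k+1 => simp [pcH_zero, Hc, show 0 + 1 - (k+1) = 0 from by omega]
    · intro k hk
      interval_cases k
      simp [pcF_zero, Fc]
  | succ n ih =>
    have hf : ∀ k, k ≤ n + 1 → pcF (n+1) k = Fc (n+1) k := by
      intro k hk
      rw [pcF_succ, ih.1 k, L2]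
      match k, hk with
      | 0, _ => rfl
      | k+1, hk =>
        show pcF n k + Hc n (k+1) = Fc n k + Hc n (k+1)
        rw [ih.2 k (by omega)]
    refine ⟨fun k => ?_, hf⟩
    by_cases hk : k ≤ n + 1
    · rw [pcH_succ, hf k hk, ih.1 k, L1 n k hk]
    · rw [pcH_succ, (pc_zero (n+1)).2 k (by omega), ih.1 k, Hc_gt n k (by omega), zero_add]

open Finset

def cnt {m : ℕ} (e : Fin m → Bool) : ℕ := ∑ i, if e i then 1 else 0

def compat {m : ℕ} (v : Fin (m+1) → Bool) (e : Fin m → Bool) : Prop :=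
  ∀ i : Fin m, e i = true → v i.castSucc = true ∧ v i.succ = true

instance {m : ℕ} (v : Fin (m+1) → Bool) (e : Fin m → Bool) : Decidable (compat v e) := by
  unfold compat; infer_instance

lemma cnt_cons {n : ℕ} (c : Bool) (e : Fin n → Bool) :
    cnt (Fin.cons c e) = (if c then 1 else 0) + cnt e := by
  rw [cnt, Fin.sum_univ_succ]
  simp [cnt]

lemma compat_cons {n : ℕ} (b c : Bool) (v : Fin (n+1) → Bool) (e : Fin n → Bool) :
    compat (Fin.cons b v) (Fin.cons c e) ↔
      (c = true → b = true ∧ v 0 = true) ∧ compat v e := by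
  unfold compat
  rw [Fin.forall_fin_succ]
  simp [← Fin.succ_castSucc]

lemma card_eq_sum {α} [Fintype α] (P : α → Prop) [DecidablePred P] :
    Fintype.card {x // P x} = ∑ x : α, if P x then 1 else 0 := by
  rw [Fintype.card_subtype, Finset.card_filter]

lemma sum_pi_succ {n : ℕ} {M : Type*} [AddCommMonoid M] (g : (Fin (n+1) → Bool) → M) :
    ∑ v, g v = ∑ b : Bool, ∑ v' : Fin n → Bool, g (Fin.cons b v') := by
  rw [← Equiv.sum_comp (Fin.consEquiv (fun _ => Bool)) g, Fintype.sum_prod_type]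
  rfl

def Fcard (n k : ℕ) : ℕ :=
  Fintype.card {p : (Fin (n+1) → Bool) × (Fin n → Bool) //
    p.1 0 = true ∧ compat p.1 p.2 ∧ cnt p.2 = k}

def Hcard (n k : ℕ) : ℕ :=
  Fintype.card {p : (Fin (n+1) → Bool) × (Fin n → Bool) //
    compat p.1 p.2 ∧ cnt p.2 = k}

lemma Fsum (n k : ℕ) : Fcard n k = ∑ v : Fin (n+1) → Bool, ∑ e : Fin n → Bool,
    if (v 0 = true ∧ compat v e ∧ cnt e = k) then 1 else 0 := by
  rw [Fcard, card_eq_sum, Fintype.sum_prod_type]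

lemma Hsum (n k : ℕ) : Hcard n k = ∑ v : Fin (n+1) → Bool, ∑ e : Fin n → Bool,
    if (compat v e ∧ cnt e = k) then 1 else 0 := by
  rw [Hcard, card_eq_sum, Fintype.sum_prod_type]

lemma Fcard_zero (k : ℕ) : Fcard 0 k = if k = 0 then 1 else 0 := by
  rw [Fsum, sum_pi_succ, Fintype.sum_bool]
  by_cases hk : k = 0 <;>
    simp [hk, compat, cnt, Subsingleton.elim _ (fun (i : Fin 0) => false)] <;> omega

lemma Hcard_zero (k : ℕ) : Hcard 0 k = if k = 0 then 2 else 0 := by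
  rw [Hsum, sum_pi_succ, Fintype.sum_bool]
  by_cases hk : k = 0 <;>
    simp [hk, compat, cnt, Subsingleton.elim _ (fun (i : Fin 0) => false)] <;> omega

lemma Hcard_succ (n k : ℕ) : Hcard (n+1) k = Fcard (n+1) k + Hcard n k := by
  rw [Hsum (n+1) k, Fsum (n+1) k, sum_pi_succ, sum_pi_succ, Fintype.sum_bool,
    Fintype.sum_bool]
  have hfalse : ∑ v' : Fin (n+1) → Bool, ∑ e : Fin (n+1) → Bool,
      (if ((Fin.cons false v' : Fin (n+2) → Bool) 0 = true ∧
            compat (Fin.cons false v') e ∧ cnt e = k) then 1 else 0) = 0 := by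
    simp
  rw [hfalse, add_zero]
  have htrue : ∀ v' : Fin (n+1) → Bool, ∑ e : Fin (n+1) → Bool,
      (if ((Fin.cons true v' : Fin (n+2) → Bool) 0 = true ∧
            compat (Fin.cons true v') e ∧ cnt e = k) then 1 else 0)
      = ∑ e : Fin (n+1) → Bool,
      (if (compat (Fin.cons true v') e ∧ cnt e = k) then 1 else 0) := by
    intro v'
    refine Finset.sum_congr rfl fun e _ => ?_
    simp
  have hHn : ∑ v' : Fin (n+1) → Bool, ∑ e : Fin (n+1) → Bool,
      (if (compat (Fin.cons false v') e ∧ cnt e = k) then 1 else 0)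
      = Hcard n k := by
    rw [Hsum n k]
    refine Finset.sum_congr rfl fun v' _ => ?_
    rw [sum_pi_succ, Fintype.sum_bool]
    have h1 : ∑ e' : Fin n → Bool,
        (if (compat (Fin.cons false v') (Fin.cons true e') ∧
          cnt (Fin.cons true e') = k) then 1 else 0) = 0 := by
      simp [compat_cons]
    rw [h1, zero_add]
    refine Finset.sum_congr rfl fun e' _ => ?_
    simp [compat_cons, cnt_cons]
  rw [Finset.sum_congr rfl fun v' _ => htrue v', hHn]

lemma Fcard_succ (n k : ℕ) :
    Fcard (n+1) k = (match k with | 0 => 0 | k+1 => Fcard n k) + Hcard n k := by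
  rw [Fsum (n+1) k, sum_pi_succ, Fintype.sum_bool]
  have hfalse : ∑ v' : Fin (n+1) → Bool, ∑ e : Fin (n+1) → Bool,
      (if ((Fin.cons false v' : Fin (n+2) → Bool) 0 = true ∧
            compat (Fin.cons false v') e ∧ cnt e = k) then 1 else 0) = 0 := by
    simp
  rw [hfalse, add_zero]
  have hsplit : ∀ v' : Fin (n+1) → Bool, ∑ e : Fin (n+1) → Bool,
      (if ((Fin.cons true v' : Fin (n+2) → Bool) 0 = true ∧
            compat (Fin.cons true v') e ∧ cnt e = k) then 1 else 0)
      = (∑ e' : Fin n → Bool,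
          (if (v' 0 = true ∧ compat v' e' ∧ cnt e' + 1 = k) then 1 else 0))
        + (∑ e' : Fin n → Bool,
          (if (compat v' e' ∧ cnt e' = k) then 1 else 0)) := by
    intro v'
    rw [sum_pi_succ, Fintype.sum_bool]
    congr 1
    · refine Finset.sum_congr rfl fun e' _ => ?_
      simp only [Fin.cons_zero, compat_cons, cnt_cons, if_pos rfl]
      by_cases h1 : v' 0 = true <;> by_cases h2 : compat v' e' <;>
        by_cases h3 : cnt e' + 1 = k <;> simp [h1, h2, h3] <;> omega
    · refine Finset.sum_congr rfl fun e' _ => ?_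
      simp only [Fin.cons_zero, compat_cons, cnt_cons]
      by_cases h2 : compat v' e' <;> by_cases h3 : cnt e' = k <;>
        simp [h2, h3] <;> omega
  rw [Finset.sum_congr rfl fun v' _ => hsplit v', Finset.sum_add_distrib]
  congr 1
  · match k with
    | 0 =>
      refine Finset.sum_eq_zero fun v' _ => Finset.sum_eq_zero fun e' _ => ?_
      simp
    | k+1 =>
      show _ = Fcard n k
      rw [Fsum n k]
      refine Finset.sum_congr rfl fun v' _ => Finset.sum_congr rfl fun e' _ => ?_
      simp
  · rw [Hsum n k]

open SimpleGraph

lemma subgraph_adj_iff {m : ℕ} (H : (pathGraph (m+1)).Subgraph) (a b : Fin (m+1)) :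
    H.Adj a b ↔ ∃ i : Fin m, H.Adj i.castSucc i.succ ∧
      ((a = i.castSucc ∧ b = i.succ) ∨ (a = i.succ ∧ b = i.castSucc)) := by
  constructor
  · intro h
    have hg := H.adj_sub h
    rw [pathGraph_adj] at hg
    rcases hg with hg | hg
    · have hb : (a : ℕ) < m := by omega
      refine ⟨⟨a, hb⟩, ?_, Or.inl ⟨?_, ?_⟩⟩
      · have h1 : (⟨(a : ℕ), hb⟩ : Fin m).castSucc = a := by
          apply Fin.ext; simp
        have h2 : (⟨(a : ℕ), hb⟩ : Fin m).succ = b := by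
          apply Fin.ext; simp; omega
        rwa [h1, h2]
      · apply Fin.ext; simp
      · apply Fin.ext; simp; omega
    · have hb : (b : ℕ) < m := by omega
      refine ⟨⟨b, hb⟩, ?_, Or.inr ⟨?_, ?_⟩⟩
      · have h1 : (⟨(b : ℕ), hb⟩ : Fin m).castSucc = b := by
          apply Fin.ext; simp
        have h2 : (⟨(b : ℕ), hb⟩ : Fin m).succ = a := by
          apply Fin.ext; simp; omega
        rw [h1, h2]; exact h.symm
      · apply Fin.ext; simp; omega
      · apply Fin.ext; simp
  · rintro ⟨i, hadj, (⟨rfl, rfl⟩ | ⟨rfl, rfl⟩)⟩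
    · exact hadj
    · exact hadj.symm

noncomputable section
open Classical

def encV {m : ℕ} (H : (pathGraph (m+1)).Subgraph) : Fin (m+1) → Bool :=
  fun i => decide (i ∈ H.verts)

def encE {m : ℕ} (H : (pathGraph (m+1)).Subgraph) : Fin m → Bool :=
  fun i => decide (H.Adj i.castSucc i.succ)

lemma encV_mem {m : ℕ} (H : (pathGraph (m+1)).Subgraph) (i : Fin (m+1)) :
    encV H i = true ↔ i ∈ H.verts := by simp [encV]

lemma encE_adj {m : ℕ} (H : (pathGraph (m+1)).Subgraph) (i : Fin m) :
    encE H i = true ↔ H.Adj i.castSucc i.succ := by simp [encE]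

lemma encE_compat {m : ℕ} (H : (pathGraph (m+1)).Subgraph) :
    compat (encV H) (encE H) := by
  intro i hi
  rw [encE_adj] at hi
  exact ⟨(encV_mem H _).2 (H.edge_vert hi), (encV_mem H _).2 (H.edge_vert hi.symm)⟩

def decSub {m : ℕ} (v : Fin (m+1) → Bool) (e : Fin m → Bool) (hc : compat v e) :
    (pathGraph (m+1)).Subgraph where
  verts := {i | v i = true}
  Adj a b := ∃ i : Fin m, e i = true ∧
    ((a = i.castSucc ∧ b = i.succ) ∨ (a = i.succ ∧ b = i.castSucc))
  adj_sub := by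
    rintro a b ⟨i, -, (⟨rfl, rfl⟩ | ⟨rfl, rfl⟩)⟩ <;> rw [pathGraph_adj] <;> simp
  edge_vert := by
    rintro a b ⟨i, hi, (⟨rfl, -⟩ | ⟨rfl, -⟩)⟩
    · exact (hc i hi).1
    · exact (hc i hi).2
  symm := by
    constructor
    rintro a b ⟨i, hi, h⟩
    exact ⟨i, hi, h.symm.imp And.symm And.symm⟩

lemma decSub_adj {m : ℕ} (v : Fin (m+1) → Bool) (e : Fin m → Bool) (hc : compat v e)
    (i : Fin m) : (decSub v e hc).Adj i.castSucc i.succ ↔ e i = true := by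
  show (∃ j : Fin m, e j = true ∧ _) ↔ _
  constructor
  · rintro ⟨j, hj, (⟨h1, h2⟩ | ⟨h1, h2⟩)⟩
    · rwa [Fin.castSucc_inj.mp h1]
    · have := congrArg Fin.val h1
      have := congrArg Fin.val h2
      simp at *
      omega
  · intro hi
    exact ⟨i, hi, Or.inl ⟨rfl, rfl⟩⟩

lemma set_ncard_cnt {m : ℕ} (e : Fin m → Bool) : {i | e i = true}.ncard = cnt e := by
  rw [Set.ncard_eq_toFinset_card', Set.toFinset_setOf, Finset.card_filter]
  rfl

lemma edgeSet_ncard {m : ℕ} (H : (pathGraph (m+1)).Subgraph) :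
    H.edgeSet.ncard = cnt (encE H) := by
  have himg : H.edgeSet = (fun i : Fin m => s(i.castSucc, i.succ)) '' {i | encE H i = true} := by
    ext x
    induction x using Sym2.ind with
    | _ a b =>
      rw [Subgraph.mem_edgeSet, subgraph_adj_iff]
      constructor
      · rintro ⟨i, hadj, hd⟩
        refine ⟨i, (encE_adj H i).2 hadj, ?_⟩
        rw [Sym2.eq_iff]
        tauto
      · rintro ⟨i, hi, heq⟩
        rw [Sym2.eq_iff] at heq
        refine ⟨i, (encE_adj H i).1 hi, ?_⟩
        tauto
  rw [himg, Set.ncard_image_of_injOn, set_ncard_cnt]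
  intro i _ j _ hij
  rw [Sym2.eq_iff] at hij
  rcases hij with ⟨h1, -⟩ | ⟨h1, h2⟩
  · exact Fin.castSucc_inj.mp h1
  · have := congrArg Fin.val h1
    have := congrArg Fin.val h2
    simp at *
    omega

def subEquiv {m : ℕ} (k : ℕ) :
    {H : (pathGraph (m+1)).Subgraph // Fin.last m ∈ H.verts ∧ H.edgeSet.ncard = k} ≃
    {p : (Fin (m+1) → Bool) × (Fin m → Bool) //
      p.1 (Fin.last m) = true ∧ compat p.1 p.2 ∧ cnt p.2 = k} where
  toFun H := ⟨(encV H.1, encE H.1),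
    (encV_mem H.1 _).2 H.2.1, encE_compat H.1, (edgeSet_ncard H.1).symm.trans H.2.2⟩
  invFun p := ⟨decSub p.1.1 p.1.2 p.2.2.1, by
    constructor
    · show p.1.1 (Fin.last m) = true
      exact p.2.1
    · rw [edgeSet_ncard]
      have he : encE (decSub p.1.1 p.1.2 p.2.2.1) = p.1.2 := by
        funext i
        have := decSub_adj p.1.1 p.1.2 p.2.2.1 i
        rw [← encE_adj] at this
        cases h : p.1.2 i
        · simp only [h] at this
          exact (Bool.not_eq_true _).mp (fun hh => by simp [hh] at this)
        · exact this.2 h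
      rw [he]
      exact p.2.2.2⟩
  left_inv H := by
    apply Subtype.ext
    apply Subgraph.ext
    · ext i
      exact encV_mem H.1 i
    · funext a b
      apply propext
      rw [show (decSub (encV H.1) (encE H.1) (encE_compat H.1)).Adj a b ↔
          ∃ i : Fin m, encE H.1 i = true ∧
            ((a = i.castSucc ∧ b = i.succ) ∨ (a = i.succ ∧ b = i.castSucc)) from Iff.rfl]
      rw [subgraph_adj_iff H.1 a b]
      constructor
      · rintro ⟨i, hi, hd⟩
        exact ⟨i, (encE_adj H.1 i).1 hi, hd⟩
      · rintro ⟨i, hi, hd⟩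
        exact ⟨i, (encE_adj H.1 i).2 hi, hd⟩
  right_inv p := by
    apply Subtype.ext
    have hv : encV (decSub p.1.1 p.1.2 p.2.2.1) = p.1.1 := by
      funext i
      have hiff := encV_mem (decSub p.1.1 p.1.2 p.2.2.1) i
      simp only [decSub, Set.mem_setOf_eq] at hiff
      cases h : p.1.1 i
      · rw [h] at hiff
        simp at hiff; exact hiff
      · exact hiff.2 h
    have he : encE (decSub p.1.1 p.1.2 p.2.2.1) = p.1.2 := by
      funext i
      have := decSub_adj p.1.1 p.1.2 p.2.2.1 i
      rw [← encE_adj] at this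
      cases h : p.1.2 i
      · simp only [h] at this
        exact (Bool.not_eq_true _).mp (fun hh => by simp [hh] at this)
      · exact this.2 h
    show (encV _, encE _) = p.1
    rw [hv, he]

lemma compat_rev {m : ℕ} (v : Fin (m+1) → Bool) (e : Fin m → Bool) (h : compat v e) :
    compat (v ∘ Fin.rev) (e ∘ Fin.rev) := by
  intro i hi
  obtain ⟨h1, h2⟩ := h i.rev hi
  constructor
  · show v i.castSucc.rev = true
    rw [Fin.rev_castSucc]
    exact h2
  · show v i.succ.rev = true
    rw [Fin.rev_succ]
    exact h1

lemma cnt_rev {m : ℕ} (e : Fin m → Bool) : cnt (e ∘ Fin.rev) = cnt e :=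
  Equiv.sum_comp Fin.revPerm (fun i => if e i then 1 else 0)

lemma rev_rev_fun {m : ℕ} (v : Fin m → Bool) : (v ∘ Fin.rev) ∘ Fin.rev = v := by
  funext i
  simp [Function.comp, Fin.rev_rev]

def revEquiv {m : ℕ} (k : ℕ) :
    {p : (Fin (m+1) → Bool) × (Fin m → Bool) //
      p.1 (Fin.last m) = true ∧ compat p.1 p.2 ∧ cnt p.2 = k} ≃
    {p : (Fin (m+1) → Bool) × (Fin m → Bool) //
      p.1 0 = true ∧ compat p.1 p.2 ∧ cnt p.2 = k} where
  toFun p := ⟨(p.1.1 ∘ Fin.rev, p.1.2 ∘ Fin.rev), by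
    refine ⟨?_, compat_rev _ _ p.2.2.1, (cnt_rev _).trans p.2.2.2⟩
    show p.1.1 (Fin.rev 0) = true
    rw [Fin.rev_zero]
    exact p.2.1⟩
  invFun p := ⟨(p.1.1 ∘ Fin.rev, p.1.2 ∘ Fin.rev), by
    refine ⟨?_, compat_rev _ _ p.2.2.1, (cnt_rev _).trans p.2.2.2⟩
    show p.1.1 ((Fin.last m).rev) = true
    rw [Fin.rev_last]
    exact p.2.1⟩
  left_inv p := by
    apply Subtype.ext
    show ((p.1.1 ∘ Fin.rev) ∘ Fin.rev, (p.1.2 ∘ Fin.rev) ∘ Fin.rev) = p.1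
    rw [rev_rev_fun, rev_rev_fun]
  right_inv p := by
    apply Subtype.ext
    show ((p.1.1 ∘ Fin.rev) ∘ Fin.rev, (p.1.2 ∘ Fin.rev) ∘ Fin.rev) = p.1
    rw [rev_rev_fun, rev_rev_fun]

end

lemma card_pc : ∀ n, (∀ k, Fcard n k = pcF n k) ∧ (∀ k, Hcard n k = pcH n k) := by
  intro n
  induction n with
  | zero =>
    exact ⟨fun k => by rw [Fcard_zero, pcF_zero], fun k => by rw [Hcard_zero, pcH_zero]⟩
  | succ n ih =>
    have hf : ∀ k, Fcard (n+1) k = pcF (n+1) k := by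
      intro k
      rw [Fcard_succ, pcF_succ, ih.2 k]
      match k with
      | 0 => rfl
      | k+1 =>
        show Fcard n k + _ = pcF n k + _
        rw [ih.1 k]
    exact ⟨hf, fun k => by rw [Hcard_succ, pcH_succ, hf k, ih.2 k]⟩

theorem path_subgraph_count (n k : ℕ) (hn : 1 ≤ n) (hk : k ≤ n - 1) :
    Set.ncard {H : (SimpleGraph.pathGraph n).Subgraph |
        (⟨n - 1, by omega⟩ : Fin n) ∈ H.verts ∧ H.edgeSet.ncard = k} =
      ∑ r ∈ Finset.range (n - k), Nat.choose (n - k - 1) r * Nat.choose (r + k) r := by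
  obtain ⟨m, rfl⟩ : ∃ m, n = m + 1 := ⟨n - 1, by omega⟩
  have hk' : k ≤ m := by omega
  have h1 : {H : (SimpleGraph.pathGraph (m+1)).Subgraph |
      (⟨m + 1 - 1, by omega⟩ : Fin (m+1)) ∈ H.verts ∧ H.edgeSet.ncard = k}.ncard
      = Fcard m k := by
    rw [← Nat.card_coe_set_eq]
    exact (Nat.card_congr ((subEquiv k).trans (revEquiv k))).trans
      (by rw [Nat.card_eq_fintype_card]; rfl)
  rw [h1, (card_pc m).1 k, (pc_closed m).2 k hk', Fc]
  have e1 : m + 1 - k = m - k + 1 := by omega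
  have e2 : m + 1 - k - 1 = m - k := by omega
  rw [e2, e1]
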